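/- For Chebyshev polynomials of the second kind, for all x in (-1,1) and all k ≥ 1, |U_k(x) - U_{k-1}(x)| ≤ √(2/(1+x)). -/

import Mathlib

theorem chebyshevU_sub_abs_le (k : ℕ) (hk : 1 ≤ k) :
    ∀ x ∈ Set.Ioo (-1 : ℝ) 1,
      |(Polynomial.Chebyshev.U ℝ k).eval x - (Polynomial.Chebyshev.U ℝ ((k : ℤ) - 1)).eval x| ≤
        Real.sqrt (2 / (1 + x)) := by
  rintro x ⟨hx1, hx2⟩
  set θ := Real.arccos x with hθ
  have hθ0 : 0 < θ := Real.arccos_pos.2 hx2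
  have hθπ : θ < Real.pi := lt_of_le_of_ne (Real.arccos_le_pi x) (fun h => absurd (Real.arccos_eq_pi.1 h) (not_le.2 hx1))
  have hcos : Real.cos θ = x := Real.cos_arccos hx1.le hx2.le
  have hsin : 0 < Real.sin θ := Real.sin_pos_of_pos_of_lt_pi hθ0 hθπ
  have hhalf0 : 0 < θ / 2 := by linarith
  have hhalfπ : θ / 2 < Real.pi / 2 := by linarith
  have hc2 : 0 < Real.cos (θ / 2) :=
    Real.cos_pos_of_mem_Ioo ⟨by linarith [Real.pi_pos], hhalfπ⟩
  have hs2 : 0 < Real.sin (θ / 2) := Real.sin_pos_of_pos_of_lt_pi hhalf0 (by linarith [Real.pi_pos])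
  -- U_k and U_{k-1} evaluated
  have hU1 : (Polynomial.Chebyshev.U ℝ (k : ℤ)).eval x * Real.sin θ
      = Real.sin (((k : ℝ) + 1) * θ) := by
    rw [← hcos]; exact_mod_cast Polynomial.Chebyshev.U_real_cos θ k
  have hU2 : (Polynomial.Chebyshev.U ℝ ((k : ℤ) - 1)).eval x * Real.sin θ
      = Real.sin ((k : ℝ) * θ) := by
    rw [← hcos]
    have := Polynomial.Chebyshev.U_real_cos θ ((k : ℤ) - 1)
    simpa using this
  have key : ((Polynomial.Chebyshev.U ℝ (k : ℤ)).eval x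
      - (Polynomial.Chebyshev.U ℝ ((k : ℤ) - 1)).eval x) * Real.sin θ
      = Real.sin (((k : ℝ) + 1) * θ) - Real.sin ((k : ℝ) * θ) := by
    rw [sub_mul, hU1, hU2]
  -- sqrt(2/(1+x)) = 1 / cos(θ/2)
  have hx1' : 0 < 1 + x := by linarith
  have hcossq : Real.cos (θ / 2) ^ 2 = (1 + x) / 2 := by
    rw [Real.cos_half (by linarith [Real.pi_pos]) hθπ.le, hcos, Real.sq_sqrt (by linarith)]
  have hsqrt : Real.sqrt (2 / (1 + x)) = 1 / Real.cos (θ / 2) := by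
    rw [show (2 : ℝ) / (1 + x) = 1 / ((1 + x) / 2) by field_simp, ← hcossq,
      one_div, one_div, Real.sqrt_inv, Real.sqrt_sq hc2.le]
  -- sin θ = 2 sin(θ/2) cos(θ/2)
  have hsinθ : Real.sin θ = 2 * Real.sin (θ / 2) * Real.cos (θ / 2) := by
    rw [← Real.sin_two_mul]; ring_nf
  -- bound
  have hbound : |Real.sin (((k : ℝ) + 1) * θ) - Real.sin ((k : ℝ) * θ)| ≤ 2 * Real.sin (θ / 2) := by
    rw [Real.sin_sub_sin]
    have h1 : (((k : ℝ) + 1) * θ - (k : ℝ) * θ) / 2 = θ / 2 := by ring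
    rw [h1, abs_mul, abs_mul]
    have := Real.abs_cos_le_one ((((k : ℝ) + 1) * θ + (k : ℝ) * θ) / 2)
    calc |(2:ℝ)| * |Real.sin (θ/2)| * |Real.cos ((((k : ℝ) + 1) * θ + (k : ℝ) * θ) / 2)|
        ≤ |(2:ℝ)| * |Real.sin (θ/2)| * 1 := by
          apply mul_le_mul_of_nonneg_left this (by positivity)
      _ = 2 * Real.sin (θ / 2) := by
          rw [mul_one, abs_of_pos hs2, abs_two]
  -- combine
  rw [← mul_le_mul_iff_of_pos_right hsin, ← abs_of_pos hsin, ← abs_mul, key, hsqrt, hsinθ]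
  calc |Real.sin (((k : ℝ) + 1) * θ) - Real.sin ((k : ℝ) * θ)| ≤ 2 * Real.sin (θ / 2) := hbound
    _ = 1 / Real.cos (θ / 2) * (2 * Real.sin (θ / 2) * Real.cos (θ / 2)) := by
        field_simp
    _ = 1 / Real.cos (θ / 2) * |2 * Real.sin (θ / 2) * Real.cos (θ / 2)| := by
        rw [abs_of_pos (by positivity)]
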